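/- Let ν be a probability measure on a finite set A and μ a probability measure on Aⁿ, and let δ = d̄_n(μ, ν^{×n}) be the transportation distance in the normalized Hamming metric. Then TC(μ) ≤ 2(H(δ,1-δ) + δ log|A|)·n. -/

import Mathlib

open Finset

def IsPMF {S : Type*} [Fintype S] (p : S → ℝ) : Prop :=
  (∀ s, 0 ≤ p s) ∧ ∑ s, p s = 1

noncomputable def entropy {S : Type*} [Fintype S] (p : S → ℝ) : ℝ :=
  ∑ s, Real.negMulLog (p s)

noncomputable def marginal {A : Type*} [Fintype A] [DecidableEq A] {n : ℕ}
    (μ : (Fin n → A) → ℝ) (i : Fin n) : A → ℝ :=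
  fun a => ∑ x : Fin n → A, if x i = a then μ x else 0

noncomputable def totalCorr {A : Type*} [Fintype A] [DecidableEq A] {n : ℕ}
    (μ : (Fin n → A) → ℝ) : ℝ :=
  (∑ i, entropy (marginal μ i)) - entropy μ

/-- The normalized Hamming metric on `Aⁿ`. -/
noncomputable def hammingN {A : Type*} [DecidableEq A] {n : ℕ} (x y : Fin n → A) : ℝ :=
  ((Finset.univ.filter fun i => x i ≠ y i).card : ℝ) / n

/-- Transportation (Kantorovich) distance between mass functions on a finite set,
for the cost `d`: the infimum of `∑ γ(x,y) d(x,y)` over couplings `γ`. -/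
noncomputable def ftdist {K : Type*} [Fintype K] (d : K → K → ℝ) (μ ν : K → ℝ) : ℝ :=
  sInf {c | ∃ γ : K × K → ℝ, (∀ p, 0 ≤ γ p) ∧
    (∀ x, ∑ y, γ (x, y) = μ x) ∧ (∀ y, ∑ x, γ (x, y) = ν y) ∧
    c = ∑ p : K × K, γ p * d p.1 p.2}

/- ======================= auxiliary development ======================= -/

lemma ite_nonneg' {P : Prop} [Decidable P] {x : ℝ} (hx : 0 ≤ x) :
    0 ≤ if P then x else 0 := by split_ifs <;> simp [hx]

lemma entropy_neg_sum {S : Type*} [Fintype S] (p : S → ℝ) :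
    entropy p = -∑ s, p s * Real.log (p s) := by
  simp [entropy, Real.negMulLog, neg_mul, Finset.sum_neg_distrib]

/-- Gibbs' inequality for possibly sub-normalized `v`. -/
lemma my_gibbs {ι : Type*} [Fintype ι] (u v : ι → ℝ) (hu : ∀ i, 0 ≤ u i)
    (hu1 : ∑ i, u i = 1) (hv : ∀ i, 0 ≤ v i) (hv1 : ∑ i, v i ≤ 1)
    (hsupp : ∀ i, u i ≠ 0 → 0 < v i) :
    ∑ i, u i * Real.log (v i) ≤ ∑ i, u i * Real.log (u i) := by
  have key : ∀ i ∈ univ, u i * Real.log (v i) - u i * Real.log (u i) ≤ v i - u i := by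
    intro i _
    rcases eq_or_lt_of_le (hu i) with h | h
    · simp [← h, hv i]
    · have hvi := hsupp i (ne_of_gt h)
      rw [← mul_sub, ← Real.log_div (ne_of_gt hvi) (ne_of_gt h)]
      have hlog := Real.log_le_sub_one_of_pos (div_pos hvi h)
      calc u i * Real.log (v i / u i) ≤ u i * (v i / u i - 1) :=
            mul_le_mul_of_nonneg_left hlog (le_of_lt h)
        _ = v i - u i := by field_simp
  have h2 := Finset.sum_le_sum key
  rw [Finset.sum_sub_distrib, Finset.sum_sub_distrib, hu1] at h2
  linarith

lemma my_negMulLog_sum_le {κ : Type*} [Fintype κ] (f : κ → ℝ) (hf : ∀ b, 0 ≤ f b) :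
    Real.negMulLog (∑ b, f b) ≤ ∑ b, Real.negMulLog (f b) := by
  rw [Real.negMulLog, neg_mul, Finset.sum_mul, ← Finset.sum_neg_distrib]
  apply Finset.sum_le_sum
  intro b _
  rcases eq_or_lt_of_le (hf b) with h | h
  · simp [← h]
  · rw [Real.negMulLog, neg_mul]
    have : Real.log (f b) ≤ Real.log (∑ c, f c) := by
      apply Real.log_le_log h
      exact Finset.single_le_sum (fun c _ => hf c) (mem_univ b)
    nlinarith

lemma entropy_fst_le {ι κ : Type*} [Fintype ι] [Fintype κ] (m : ι × κ → ℝ)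
    (hm : ∀ p, 0 ≤ m p) :
    entropy (fun a => ∑ b, m (a, b)) ≤ entropy m := by
  unfold entropy
  rw [Fintype.sum_prod_type]
  exact Finset.sum_le_sum fun a _ => my_negMulLog_sum_le _ (fun b => hm (a, b))

lemma entropy_snd_le {ι κ : Type*} [Fintype ι] [Fintype κ] (m : ι × κ → ℝ)
    (hm : ∀ p, 0 ≤ m p) :
    entropy (fun b => ∑ a, m (a, b)) ≤ entropy m := by
  unfold entropy
  rw [Fintype.sum_prod_type_right]
  exact Finset.sum_le_sum fun b _ => my_negMulLog_sum_le _ (fun a => hm (a, b))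

lemma my_negMulLog_prod {ι : Type*} [DecidableEq ι] (s : Finset ι) (f : ι → ℝ) :
    Real.negMulLog (∏ i ∈ s, f i) =
      ∑ j ∈ s, (∏ i ∈ s.erase j, f i) * Real.negMulLog (f j) := by
  induction s using Finset.induction with
  | empty => simp
  | @insert a s ha ih =>
    rw [Finset.prod_insert ha, Real.negMulLog_mul, ih, Finset.sum_insert ha,
      Finset.erase_insert ha, Finset.mul_sum]
    congr 1
    apply Finset.sum_congr rfl
    intro j hj
    rw [Finset.erase_insert_of_ne (by rintro rfl; exact ha hj), Finset.prod_insert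
      (fun h => ha (Finset.erase_subset _ _ h))]
    ring

section prodfacts
variable {A : Type*} [Fintype A] [DecidableEq A] {n : ℕ} (ν : A → ℝ)

lemma sum_prod_pmf (hν : IsPMF ν) : ∑ x : Fin n → A, ∏ j, ν (x j) = 1 := by
  rw [← Fintype.prod_sum (fun (_ : Fin n) (b : A) => ν b)]
  simp [hν.2]

lemma marginal_prod (hν : IsPMF ν) (i : Fin n) (a : A) :
    marginal (fun x => ∏ j, ν (x j)) i a = ν a := by
  unfold marginal
  have h1 : ∀ x : Fin n → A, (if x i = a then ∏ j, ν (x j) else 0)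
      = ∏ j, (if j = i then (if x j = a then ν (x j) else 0) else ν (x j)) := by
    intro x
    by_cases hx : x i = a
    · rw [if_pos hx]
      exact Finset.prod_congr rfl fun j _ => by split_ifs with h1 h2 <;> simp_all
    · rw [if_neg hx]
      exact (Finset.prod_eq_zero (mem_univ i) (by simp [hx])).symm
  rw [Finset.sum_congr rfl fun x _ => h1 x,
    ← Fintype.prod_sum (fun (j : Fin n) (b : A) => if j = i then (if b = a then ν b else 0) else ν b)]
  have h2 : ∀ j : Fin n, (∑ b, if j = i then (if b = a then ν b else 0) else ν b)
      = if j = i then ν a else 1 := by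
    intro j
    split_ifs with h
    · simp
    · exact hν.2
  rw [Finset.prod_congr rfl fun j _ => h2 j]
  simp

lemma entropy_prod (hν : IsPMF ν) :
    entropy (fun x : Fin n → A => ∏ j, ν (x j)) = n * entropy ν := by
  unfold entropy
  have h1 : ∀ x : Fin n → A, Real.negMulLog (∏ j, ν (x j))
      = ∑ j, (∏ k ∈ univ.erase j, ν (x k)) * Real.negMulLog (ν (x j)) := fun x =>
    my_negMulLog_prod _ _
  rw [Finset.sum_congr rfl fun x _ => h1 x, Finset.sum_comm]
  have h2 : ∀ j : Fin n, (∑ x : Fin n → A, (∏ k ∈ univ.erase j, ν (x k)) * Real.negMulLog (ν (x j)))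
      = entropy ν := by
    intro j
    have h3 : ∀ x : Fin n → A, (∏ k ∈ univ.erase j, ν (x k)) * Real.negMulLog (ν (x j))
        = ∏ k, (if k = j then Real.negMulLog (ν (x k)) else ν (x k)) := by
      intro x
      rw [eq_comm, ← Finset.mul_prod_erase univ _ (mem_univ j), if_pos rfl, mul_comm]
      congr 1
      exact Finset.prod_congr rfl fun k hk => by rw [if_neg (Finset.ne_of_mem_erase hk)]
    rw [Finset.sum_congr rfl fun x _ => h3 x,
      ← Fintype.prod_sum (fun (k : Fin n) (b : A) => if k = j then Real.negMulLog (ν b) else ν b)]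
    have h4 : ∀ k : Fin n, (∑ b, if k = j then Real.negMulLog (ν b) else ν b)
        = if k = j then entropy ν else 1 := by
      intro k; split_ifs with h
      · rfl
      · exact hν.2
    rw [Finset.prod_congr rfl fun k _ => h4 k]
    simp
  rw [Finset.sum_congr rfl fun j _ => h2 j, Finset.sum_const, card_univ, Fintype.card_fin,
    nsmul_eq_mul, entropy]
end prodfacts

noncomputable def phiH (C t : ℝ) : ℝ :=
  Real.negMulLog t + Real.negMulLog (1 - t) + t * Real.log C

section fano
variable {A : Type*} [Fintype A] [DecidableEq A]

noncomputable def offDiag' (m : A × A → ℝ) : ℝ := ∑ q : A × A, if q.1 ≠ q.2 then m q else 0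

/-- Fano-type inequality: `H(m) ≤ H(snd marginal) + H(ε,1-ε) + ε log |A|`. -/
lemma fano_snd (m : A × A → ℝ) (hm : IsPMF m) :
    entropy m ≤ entropy (fun b => ∑ a, m (a, b)) + phiH (Fintype.card A) (offDiag' m) := by
  rw [phiH]
  have hcard : 0 < (Fintype.card A : ℝ) := by
    have : Nonempty A := by
      by_contra h
      have : IsEmpty A := not_nonempty_iff.mp h
      have := hm.2
      simp [Fintype.sum_empty] at this
    exact_mod_cast Fintype.card_pos
  set ε := offDiag' m with hε
  set q : A → ℝ := fun b => ∑ a, m (a, b) with hq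
  have hq0 : ∀ b, 0 ≤ q b := fun b => Finset.sum_nonneg fun a _ => hm.1 _
  have hq1 : ∑ b, q b = 1 := by
    rw [hq, ← hm.2, Fintype.sum_prod_type_right]
  have hε0 : 0 ≤ ε := Finset.sum_nonneg fun p _ => ite_nonneg' (hm.1 p)
  have hdiag : (∑ q : A × A, if q.1 = q.2 then m q else 0) = 1 - ε := by
    rw [hε, offDiag', ← hm.2, eq_sub_iff_add_eq, ← Finset.sum_add_distrib]
    apply Finset.sum_congr rfl
    intro p _
    by_cases h : p.1 = p.2 <;> simp [h]
  have hε1 : ε ≤ 1 := by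
    have : 0 ≤ ∑ q : A × A, if q.1 = q.2 then m q else 0 :=
      Finset.sum_nonneg fun p _ => ite_nonneg' (hm.1 p)
    linarith [hdiag]
  set r : A × A → ℝ := fun p => if p.1 = p.2 then 1 - ε else ε / Fintype.card A with hr
  have hr0 : ∀ p, 0 ≤ r p := by
    intro p; rw [hr]; dsimp only; split_ifs
    · linarith
    · positivity
  have hqpos : ∀ p : A × A, m p ≠ 0 → 0 < q p.2 := by
    intro p hp
    have hmp : 0 < m p := lt_of_le_of_ne (hm.1 p) (Ne.symm hp)
    calc (0:ℝ) < m p := hmp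
      _ ≤ q p.2 :=
        Finset.single_le_sum (f := fun a => m (a, p.2)) (fun a _ => hm.1 _) (mem_univ p.1)
  have hrpos : ∀ p : A × A, m p ≠ 0 → 0 < r p := by
    intro p hp
    have hmp : 0 < m p := lt_of_le_of_ne (hm.1 p) (Ne.symm hp)
    rw [hr]; dsimp only
    split_ifs with h
    · have : m p ≤ ∑ q : A × A, if q.1 = q.2 then m q else 0 := by
        have := Finset.single_le_sum (f := fun q : A × A => if q.1 = q.2 then m q else 0)
          (fun q _ => ite_nonneg' (hm.1 q)) (mem_univ p)
        simpa [h] using this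
      rw [hdiag] at this
      linarith
    · have : m p ≤ ε := by
        have := Finset.single_le_sum (f := fun q : A × A => if q.1 ≠ q.2 then m q else 0)
          (fun q _ => ite_nonneg' (hm.1 q)) (mem_univ p)
        simpa [hε, offDiag', h] using this
      exact div_pos (lt_of_lt_of_le hmp this) hcard
  set v : A × A → ℝ := fun p => q p.2 * r p with hv
  have hv0 : ∀ p, 0 ≤ v p := fun p => mul_nonneg (hq0 _) (hr0 p)
  have hsumr : ∀ b : A, ∑ a, r (a, b) ≤ 1 := by
    intro b
    have h5 : ∀ a : A, r (a, b) = (if a = b then 1 - ε - ε / Fintype.card A else 0)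
        + ε / Fintype.card A := by
      intro a; rw [hr]; dsimp only; split_ifs <;> ring
    rw [Finset.sum_congr rfl fun a _ => h5 a, Finset.sum_add_distrib,
      Finset.sum_ite_eq' univ b (fun _ => 1 - ε - ε / Fintype.card A), if_pos (mem_univ b),
      Finset.sum_const, card_univ, nsmul_eq_mul]
    have hn : 0 < Fintype.card A := by exact_mod_cast hcard
    have hge1 : (1:ℝ) ≤ Fintype.card A := by exact_mod_cast hn
    have : (Fintype.card A : ℝ) * (ε / Fintype.card A) = ε := by field_simp
    linarith [div_nonneg hε0 (le_of_lt hcard)]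
  have hv1 : ∑ p : A × A, v p ≤ 1 := by
    calc ∑ p : A × A, v p = ∑ b, ∑ a, q b * r (a, b) := by
          rw [Fintype.sum_prod_type_right]
      _ = ∑ b, q b * ∑ a, r (a, b) := by
          refine Finset.sum_congr rfl fun b _ => ?_
          rw [Finset.mul_sum]
      _ ≤ ∑ b, q b * 1 := Finset.sum_le_sum fun b _ =>
          mul_le_mul_of_nonneg_left (hsumr b) (hq0 b)
      _ = 1 := by simp [hq1]
  have hsupp : ∀ p, m p ≠ 0 → 0 < v p := fun p hp => mul_pos (hqpos p hp) (hrpos p hp)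
  have hgibbs := my_gibbs m v hm.1 hm.2 hv0 hv1 hsupp
  have hsplit : ∀ p : A × A, m p * Real.log (v p)
      = m p * Real.log (q p.2) + m p * Real.log (r p) := by
    intro p
    by_cases hp : m p = 0
    · simp [hp]
    · rw [← mul_add, ← Real.log_mul (ne_of_gt (hqpos p hp)) (ne_of_gt (hrpos p hp))]
  have hqterm : ∑ p : A × A, m p * Real.log (q p.2) = -entropy q := by
    rw [Fintype.sum_prod_type_right, entropy_neg_sum, neg_neg]
    refine Finset.sum_congr rfl fun b _ => ?_
    dsimp only
    rw [← Finset.sum_mul]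
  have hrterm : ∑ p : A × A, m p * Real.log (r p)
      = -Real.negMulLog (1 - ε) - Real.negMulLog ε - ε * Real.log (Fintype.card A) := by
    have hterm : ∀ p : A × A, m p * Real.log (r p)
        = (if p.1 = p.2 then m p else 0) * Real.log (1 - ε)
          + (if p.1 ≠ p.2 then m p else 0) * Real.log (ε / Fintype.card A) := by
      intro p; rw [hr]; dsimp only; by_cases h : p.1 = p.2 <;> simp [h]
    rw [Finset.sum_congr rfl fun p _ => hterm p, Finset.sum_add_distrib, ← Finset.sum_mul,
      ← Finset.sum_mul, hdiag, ← offDiag', ← hε]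
    by_cases h0 : ε = 0
    · simp [h0, Real.negMulLog]
    · rw [Real.log_div h0 (ne_of_gt hcard), Real.negMulLog, Real.negMulLog]
      ring
  rw [Finset.sum_congr rfl fun p _ => hsplit p, Finset.sum_add_distrib, hqterm, hrterm] at hgibbs
  have hent := entropy_neg_sum m
  linarith

lemma fano_fst (m : A × A → ℝ) (hm : IsPMF m) :
    entropy m ≤ entropy (fun a => ∑ b, m (a, b)) + phiH (Fintype.card A) (offDiag' m) := by
  have hm' : IsPMF (fun p : A × A => m (p.2, p.1)) := by
    refine ⟨fun p => hm.1 _, ?_⟩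
    rw [← hm.2]
    exact Fintype.sum_equiv (Equiv.prodComm A A) _ _ (fun p => rfl)
  have h1 := fano_snd (fun p : A × A => m (p.2, p.1)) hm'
  have he : entropy (fun p : A × A => m (p.2, p.1)) = entropy m := by
    unfold entropy
    exact Fintype.sum_equiv (Equiv.prodComm A A) _ _ (fun p => rfl)
  have ho : offDiag' (fun p : A × A => m (p.2, p.1)) = offDiag' m := by
    unfold offDiag'
    refine Fintype.sum_equiv (Equiv.prodComm A A) _ _ (fun p => ?_)
    exact if_congr ne_comm rfl rfl
  rw [he, ho] at h1
  exact h1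
end fano

section pair
variable {A : Type*} [Fintype A] [DecidableEq A] {n : ℕ}

lemma marginal_nonneg {μ : (Fin n → A) → ℝ} (hμ : ∀ x, 0 ≤ μ x) (i : Fin n) (a : A) :
    0 ≤ marginal μ i a := Finset.sum_nonneg fun x _ => ite_nonneg' (hμ x)

lemma le_marginal {μ : (Fin n → A) → ℝ} (hμ : ∀ x, 0 ≤ μ x) (i : Fin n) (x : Fin n → A) :
    μ x ≤ marginal μ i (x i) := by
  have := Finset.single_le_sum (f := fun x' : Fin n → A => if x' i = x i then μ x' else 0)
    (fun x' _ => ite_nonneg' (hμ x')) (mem_univ x)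
  simpa [marginal] using this

noncomputable def pairM (γ : ((Fin n → A) × (Fin n → A)) → ℝ) (i : Fin n) : A × A → ℝ :=
  fun q => ∑ p : (Fin n → A) × (Fin n → A), if p.1 i = q.1 ∧ p.2 i = q.2 then γ p else 0

lemma pairM_nonneg {γ : ((Fin n → A) × (Fin n → A)) → ℝ} (hγ : ∀ p, 0 ≤ γ p) (i : Fin n)
    (q : A × A) : 0 ≤ pairM γ i q :=
  Finset.sum_nonneg fun p _ => ite_nonneg' (hγ p)

lemma sum_pairM (γ : ((Fin n → A) × (Fin n → A)) → ℝ) (i : Fin n) (F : A × A → ℝ) :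
    ∑ q : A × A, pairM γ i q * F q
      = ∑ p : (Fin n → A) × (Fin n → A), γ p * F (p.1 i, p.2 i) := by
  unfold pairM
  simp_rw [Finset.sum_mul, ite_mul, zero_mul]
  rw [Finset.sum_comm]
  refine Finset.sum_congr rfl fun p _ => ?_
  have h1 : ∀ q : A × A, (if p.1 i = q.1 ∧ p.2 i = q.2 then γ p * F q else 0)
      = if q = (p.1 i, p.2 i) then γ p * F q else 0 := by
    intro q
    by_cases h : q = (p.1 i, p.2 i)
    · subst h; simp
    · rw [if_neg h, if_neg]
      rintro ⟨h1, h2⟩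
      exact h (Prod.ext h1.symm h2.symm)
  rw [Finset.sum_congr rfl fun q _ => h1 q,
    Finset.sum_ite_eq' univ (p.1 i, p.2 i) (fun q => γ p * F q), if_pos (mem_univ _)]

lemma pairM_le {γ : ((Fin n → A) × (Fin n → A)) → ℝ} (hγ : ∀ p, 0 ≤ γ p) (i : Fin n)
    (p : (Fin n → A) × (Fin n → A)) : γ p ≤ pairM γ i (p.1 i, p.2 i) := by
  have := Finset.single_le_sum
    (f := fun p' : (Fin n → A) × (Fin n → A) =>
      if p'.1 i = p.1 i ∧ p'.2 i = p.2 i then γ p' else 0)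
    (fun p' _ => ite_nonneg' (hγ p')) (mem_univ p)
  simpa [pairM] using this

lemma pairM_fst {γ : ((Fin n → A) × (Fin n → A)) → ℝ} {μ : (Fin n → A) → ℝ}
    (hγ1 : ∀ x, ∑ y, γ (x, y) = μ x) (i : Fin n) (a : A) :
    ∑ b, pairM γ i (a, b) = marginal μ i a := by
  unfold pairM marginal
  rw [Finset.sum_comm]
  have h1 : ∀ p : (Fin n → A) × (Fin n → A),
      (∑ b, if p.1 i = a ∧ p.2 i = b then γ p else 0) = if p.1 i = a then γ p else 0 := by
    intro p
    by_cases h : p.1 i = a <;> simp [h, Finset.sum_ite_eq]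
  rw [Finset.sum_congr rfl fun p _ => h1 p, Fintype.sum_prod_type]
  refine Finset.sum_congr rfl fun x _ => ?_
  by_cases h : x i = a
  · simp only [if_pos h, ← hγ1 x]
  · simp [h]

lemma pairM_snd {γ : ((Fin n → A) × (Fin n → A)) → ℝ} {w : (Fin n → A) → ℝ}
    (hγ2 : ∀ y, ∑ x, γ (x, y) = w y) (i : Fin n) (b : A) :
    ∑ a, pairM γ i (a, b) = marginal w i b := by
  unfold pairM marginal
  rw [Finset.sum_comm]
  have h1 : ∀ p : (Fin n → A) × (Fin n → A),
      (∑ a, if p.1 i = a ∧ p.2 i = b then γ p else 0) = if p.2 i = b then γ p else 0 := by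
    intro p
    by_cases h : p.2 i = b <;> simp [h, Finset.sum_ite_eq]
  rw [Finset.sum_congr rfl fun p _ => h1 p, Fintype.sum_prod_type_right]
  refine Finset.sum_congr rfl fun y _ => ?_
  by_cases h : y i = b
  · simp only [if_pos h, ← hγ2 y]
  · simp [h]

lemma cond_subadd {γ : ((Fin n → A) × (Fin n → A)) → ℝ} {μ : (Fin n → A) → ℝ}
    (hγ0 : ∀ p, 0 ≤ γ p) (hγ1 : ∀ x, ∑ y, γ (x, y) = μ x) (hμ : IsPMF μ) :
    entropy γ ≤ entropy μ + ∑ i, (entropy (pairM γ i) - entropy (marginal μ i)) := by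
  classical
  have hγsum : ∑ p : (Fin n → A) × (Fin n → A), γ p = 1 := by
    rw [Fintype.sum_prod_type, ← hμ.2]
    exact Finset.sum_congr rfl fun x _ => hγ1 x
  set r : Fin n → ((Fin n → A) × (Fin n → A)) → ℝ :=
    fun i p => pairM γ i (p.1 i, p.2 i) / marginal μ i (p.1 i) with hrdef
  set v : ((Fin n → A) × (Fin n → A)) → ℝ := fun p => μ p.1 * ∏ i, r i p with hvdef
  have hr0 : ∀ i p, 0 ≤ r i p := fun i p =>
    div_nonneg (pairM_nonneg hγ0 i _) (marginal_nonneg hμ.1 i _)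
  have hv0 : ∀ p, 0 ≤ v p := fun p =>
    mul_nonneg (hμ.1 _) (Finset.prod_nonneg fun i _ => hr0 i p)
  have hv1 : ∑ p : (Fin n → A) × (Fin n → A), v p ≤ 1 := by
    rw [Fintype.sum_prod_type]
    have hx : ∀ x : Fin n → A, ∑ y : Fin n → A, v (x, y) ≤ μ x := by
      intro x
      have hy : ∀ y : Fin n → A,
          v (x, y) = μ x * ∏ i, pairM γ i (x i, y i) / marginal μ i (x i) := fun y => rfl
      rw [Finset.sum_congr rfl fun y _ => hy y, ← Finset.mul_sum,
        ← Fintype.prod_sum (fun (i : Fin n) (b : A) => pairM γ i (x i, b) / marginal μ i (x i))]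
      refine mul_le_of_le_one_right (hμ.1 x) ?_
      refine Finset.prod_le_one (fun i _ => ?_) (fun i _ => ?_)
      · exact Finset.sum_nonneg fun b _ =>
          div_nonneg (pairM_nonneg hγ0 i _) (marginal_nonneg hμ.1 i _)
      · rw [← Finset.sum_div, pairM_fst hγ1]
        exact div_self_le_one _
    calc ∑ x : Fin n → A, ∑ y : Fin n → A, v (x, y) ≤ ∑ x : Fin n → A, μ x :=
          Finset.sum_le_sum fun x _ => hx x
      _ = 1 := hμ.2
  have hμpos : ∀ p : (Fin n → A) × (Fin n → A), γ p ≠ 0 → 0 < μ p.1 := by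
    intro p hp
    have h1 : 0 < γ p := lt_of_le_of_ne (hγ0 p) (Ne.symm hp)
    have h2 : γ p ≤ μ p.1 := by
      rw [← hγ1 p.1]
      exact Finset.single_le_sum (f := fun y => γ (p.1, y)) (fun y _ => hγ0 _) (mem_univ p.2)
    linarith
  have hrpos : ∀ i (p : (Fin n → A) × (Fin n → A)), γ p ≠ 0 → 0 < r i p := by
    intro i p hp
    have h1 : 0 < γ p := lt_of_le_of_ne (hγ0 p) (Ne.symm hp)
    refine div_pos (lt_of_lt_of_le h1 (pairM_le hγ0 i p)) ?_
    exact lt_of_lt_of_le (hμpos p hp) (le_marginal hμ.1 i p.1)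
  have hsupp : ∀ p, γ p ≠ 0 → 0 < v p := fun p hp =>
    mul_pos (hμpos p hp) (Finset.prod_pos fun i _ => hrpos i p hp)
  have hgibbs := my_gibbs γ v hγ0 hγsum hv0 hv1 hsupp
  have hsplit : ∀ p : (Fin n → A) × (Fin n → A),
      γ p * Real.log (v p) = γ p * Real.log (μ p.1) + ∑ i, γ p * Real.log (r i p) := by
    intro p
    by_cases hp : γ p = 0
    · simp [hp]
    · rw [hvdef]
      dsimp only
      rw [Real.log_mul (ne_of_gt (hμpos p hp))
          (ne_of_gt (Finset.prod_pos fun i _ => hrpos i p hp)),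
        Real.log_prod (fun i _ => ne_of_gt (hrpos i p hp)), mul_add, Finset.mul_sum]
  have hμterm : ∑ p : (Fin n → A) × (Fin n → A), γ p * Real.log (μ p.1) = -entropy μ := by
    rw [Fintype.sum_prod_type, entropy_neg_sum, neg_neg]
    refine Finset.sum_congr rfl fun x _ => ?_
    dsimp only
    rw [← Finset.sum_mul, hγ1]
  have hrterm : ∀ i : Fin n, ∑ p : (Fin n → A) × (Fin n → A), γ p * Real.log (r i p)
      = -entropy (pairM γ i) + entropy (marginal μ i) := by
    intro i
    rw [hrdef]
    dsimp only
    rw [← sum_pairM γ i (fun q => Real.log (pairM γ i q / marginal μ i q.1))]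
    have hterm : ∀ q : A × A, pairM γ i q * Real.log (pairM γ i q / marginal μ i q.1)
        = pairM γ i q * Real.log (pairM γ i q) - pairM γ i q * Real.log (marginal μ i q.1) := by
      intro q
      by_cases hq : pairM γ i q = 0
      · simp [hq]
      · have h1 : 0 < pairM γ i q := lt_of_le_of_ne (pairM_nonneg hγ0 i q) (Ne.symm hq)
        have h2 : 0 < marginal μ i q.1 := by
          rw [← pairM_fst hγ1]
          calc (0:ℝ) < pairM γ i q := h1
            _ = pairM γ i (q.1, q.2) := by rw [Prod.mk.eta]
            _ ≤ ∑ b, pairM γ i (q.1, b) := Finset.single_le_sum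
                (f := fun b => pairM γ i (q.1, b)) (fun b _ => pairM_nonneg hγ0 i _)
                (mem_univ q.2)
        rw [Real.log_div hq (ne_of_gt h2), mul_sub]
    rw [Finset.sum_congr rfl fun q _ => hterm q, Finset.sum_sub_distrib]
    have h3 : ∑ q : A × A, pairM γ i q * Real.log (pairM γ i q) = -entropy (pairM γ i) := by
      rw [entropy_neg_sum, neg_neg]
    have h4 : ∑ q : A × A, pairM γ i q * Real.log (marginal μ i q.1)
        = -entropy (marginal μ i) := by
      rw [Fintype.sum_prod_type, entropy_neg_sum, neg_neg]
      refine Finset.sum_congr rfl fun a _ => ?_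
      dsimp only
      rw [← Finset.sum_mul, pairM_fst hγ1]
    rw [h3, h4]
    ring
  rw [Finset.sum_congr rfl fun p _ => hsplit p, Finset.sum_add_distrib, hμterm,
    Finset.sum_comm, Finset.sum_congr rfl fun i _ => hrterm i] at hgibbs
  have hent := entropy_neg_sum γ
  rw [Finset.sum_add_distrib] at hgibbs
  have e1 : ∑ i : Fin n, (entropy (pairM γ i) - entropy (marginal μ i))
      = ∑ i : Fin n, entropy (pairM γ i) - ∑ i : Fin n, entropy (marginal μ i) :=
    Finset.sum_sub_distrib _ _
  have e2 : ∑ i : Fin n, -entropy (pairM γ i) = -∑ i : Fin n, entropy (pairM γ i) :=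
    Finset.sum_neg_distrib _
  linarith
end pair

lemma phiH_concave {C : ℝ} (hC : 1 ≤ C) :
    ConcaveOn ℝ (Set.Icc (0:ℝ) 1) (phiH C) := by
  have c1 : ConcaveOn ℝ (Set.Icc (0:ℝ) 1) Real.negMulLog :=
    Real.concaveOn_negMulLog.subset (fun x hx => hx.1) (convex_Icc 0 1)
  have c2 : ConcaveOn ℝ (Set.Icc (0:ℝ) 1) (fun t => Real.negMulLog (1 - t)) := by
    refine ⟨convex_Icc 0 1, fun x hx y hy a b ha hb hab => ?_⟩
    have h1 := Real.concaveOn_negMulLog.2 (Set.mem_Ici.mpr (by linarith [hx.2] : (0:ℝ) ≤ 1 - x))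
      (Set.mem_Ici.mpr (by linarith [hy.2] : (0:ℝ) ≤ 1 - y)) ha hb hab
    simp only [smul_eq_mul] at h1 ⊢
    have harg : a * (1 - x) + b * (1 - y) = 1 - (a * x + b * y) := by
      linear_combination hab
    rw [harg] at h1
    exact h1
  have c3 : ConcaveOn ℝ (Set.Icc (0:ℝ) 1) (fun t : ℝ => t * Real.log C) := by
    refine ⟨convex_Icc 0 1, fun x _ y _ a b _ _ _ => ?_⟩
    simp only [smul_eq_mul]
    exact le_of_eq (by ring)
  have := (c1.add c2).add c3
  convert this using 1 <;> rfl

/-- The key bound for a single coupling. -/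
lemma key_bound {A : Type*} [Fintype A] [DecidableEq A] {n : ℕ} (hn : 0 < n)
    (ν : A → ℝ) (hν : IsPMF ν) (μ : (Fin n → A) → ℝ) (hμ : IsPMF μ)
    (γ : ((Fin n → A) × (Fin n → A)) → ℝ)
    (hγ0 : ∀ p, 0 ≤ γ p) (hγ1 : ∀ x, ∑ y, γ (x, y) = μ x)
    (hγ2 : ∀ y, ∑ x, γ (x, y) = ∏ i, ν (y i)) (c : ℝ)
    (hc : c = ∑ p : (Fin n → A) × (Fin n → A), γ p * hammingN p.1 p.2) :
    totalCorr μ ≤ 2 * phiH (Fintype.card A) c * n := by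
  classical
  set C : ℝ := (Fintype.card A : ℝ) with hCdef
  set d : Fin n → ℝ := fun i => offDiag' (pairM γ i) with hddef
  have hAne : Nonempty A := by
    by_contra h
    have : IsEmpty A := not_nonempty_iff.mp h
    have := hν.2
    simp at this
  have hC1 : 1 ≤ C := by
    rw [hCdef]
    exact_mod_cast Fintype.card_pos
  have hγsum : ∑ p : (Fin n → A) × (Fin n → A), γ p = 1 := by
    rw [Fintype.sum_prod_type, ← hμ.2]
    exact Finset.sum_congr rfl fun x _ => hγ1 x
  have hpmf : ∀ i, IsPMF (pairM γ i) := by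
    intro i
    refine ⟨pairM_nonneg hγ0 i, ?_⟩
    have := sum_pairM γ i (fun _ => (1:ℝ))
    simp only [mul_one] at this
    rw [this, hγsum]
  have hfst : ∀ i, (fun a => ∑ b, pairM γ i (a, b)) = marginal μ i :=
    fun i => funext (pairM_fst hγ1 i)
  have hsnd : ∀ i, (fun b => ∑ a, pairM γ i (a, b)) = ν :=
    fun i => funext fun b => (pairM_snd hγ2 i b).trans (marginal_prod ν hν i b)
  have hA : ∀ i, entropy (marginal μ i) ≤ entropy ν + phiH C (d i) := by
    intro i
    have h1 := entropy_fst_le (pairM γ i) (pairM_nonneg hγ0 i)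
    rw [hfst i] at h1
    have h2 := fano_snd (pairM γ i) (hpmf i)
    rw [hsnd i] at h2
    exact le_trans h1 h2
  have hB : ∀ i, entropy (pairM γ i) - entropy (marginal μ i) ≤ phiH C (d i) := by
    intro i
    have h2 := fano_fst (pairM γ i) (hpmf i)
    rw [hfst i] at h2
    have : phiH (Fintype.card A) (offDiag' (pairM γ i)) = phiH C (d i) := rfl
    rw [this] at h2
    linarith
  have hcond := cond_subadd hγ0 hγ1 hμ
  have hwent : entropy (fun y : Fin n → A => ∏ i, ν (y i)) = n * entropy ν :=
    entropy_prod ν hν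
  have hwγ : entropy (fun y : Fin n → A => ∏ i, ν (y i)) ≤ entropy γ := by
    have h := entropy_snd_le γ hγ0
    rw [show (fun y => ∑ x, γ (x, y)) = (fun y : Fin n → A => ∏ i, ν (y i)) from
      funext hγ2] at h
    exact h
  have hsum1 : ∑ i, entropy (marginal μ i) ≤ n * entropy ν + ∑ i, phiH C (d i) := by
    calc ∑ i, entropy (marginal μ i) ≤ ∑ i : Fin n, (entropy ν + phiH C (d i)) :=
          Finset.sum_le_sum fun i _ => hA i
      _ = n * entropy ν + ∑ i, phiH C (d i) := by
          rw [Finset.sum_add_distrib, Finset.sum_const, card_univ, Fintype.card_fin,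
            nsmul_eq_mul]
  have hsum2 : n * entropy ν - ∑ i, phiH C (d i) ≤ entropy μ := by
    have h1 : ∑ i, (entropy (pairM γ i) - entropy (marginal μ i)) ≤ ∑ i, phiH C (d i) :=
      Finset.sum_le_sum fun i _ => hB i
    linarith
  -- Jensen step
  have hd0 : ∀ i, 0 ≤ d i := fun i => Finset.sum_nonneg fun q _ => ite_nonneg' ((hpmf i).1 q)
  have hd1 : ∀ i, d i ≤ 1 := by
    intro i
    have : d i ≤ ∑ q : A × A, pairM γ i q := by
      refine Finset.sum_le_sum fun q _ => ?_
      split_ifs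
      · exact le_rfl
      · exact (hpmf i).1 q
    rw [(hpmf i).2] at this
    exact this
  have hnR : (0:ℝ) < n := by exact_mod_cast hn
  have hdsum : ∑ i, d i = c * n := by
    have hdi : ∀ i : Fin n, d i = ∑ p : (Fin n → A) × (Fin n → A),
        γ p * (if p.1 i ≠ p.2 i then (1:ℝ) else 0) := by
      intro i
      have h := sum_pairM γ i (fun q => if q.1 ≠ q.2 then (1:ℝ) else 0)
      rw [← h, hddef]
      dsimp only
      unfold offDiag'
      refine Finset.sum_congr rfl fun q _ => ?_
      by_cases hq : q.1 ≠ q.2 <;> simp [hq]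
    rw [Finset.sum_congr rfl fun i _ => hdi i, Finset.sum_comm, hc, Finset.sum_mul]
    refine Finset.sum_congr rfl fun p _ => ?_
    rw [← Finset.mul_sum, Finset.sum_boole]
    rw [mul_assoc]
    congr 1
    rw [hammingN]
    field_simp
  have hjensen : ∑ i, phiH C (d i) ≤ n * phiH C c := by
    have hcon := phiH_concave hC1
    have hw0 : ∀ i ∈ (univ : Finset (Fin n)), (0:ℝ) ≤ (n:ℝ)⁻¹ := fun i _ => by positivity
    have hw1 : ∑ _i : Fin n, (n:ℝ)⁻¹ = 1 := by
      rw [Finset.sum_const, card_univ, Fintype.card_fin, nsmul_eq_mul]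
      field_simp
    have hmem : ∀ i ∈ (univ : Finset (Fin n)), d i ∈ Set.Icc (0:ℝ) 1 :=
      fun i _ => ⟨hd0 i, hd1 i⟩
    have hj := hcon.le_map_sum hw0 hw1 hmem
    simp only [smul_eq_mul] at hj
    have harg : ∑ i, (n:ℝ)⁻¹ * d i = c := by
      rw [← Finset.mul_sum, hdsum]
      field_simp
    rw [harg] at hj
    have : ∑ i, (n:ℝ)⁻¹ * phiH C (d i) = (n:ℝ)⁻¹ * ∑ i, phiH C (d i) := by
      rw [Finset.mul_sum]
    rw [this] at hj
    calc ∑ i, phiH C (d i) = n * ((n:ℝ)⁻¹ * ∑ i, phiH C (d i)) := by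
          field_simp
      _ ≤ n * phiH C c := mul_le_mul_of_nonneg_left hj (le_of_lt hnR)
  have : totalCorr μ ≤ 2 * ∑ i, phiH C (d i) := by
    rw [totalCorr]
    linarith
  calc totalCorr μ ≤ 2 * ∑ i, phiH C (d i) := this
    _ ≤ 2 * (n * phiH C c) := by linarith
    _ = 2 * phiH C c * n := by ring

/-- If `δ = d̄ₙ(μ, ν^{×n})` then `TC(μ) ≤ 2 (H(δ,1-δ) + δ log|A|) n`. -/
theorem totalCorr_le_of_close_to_product {A : Type*} [Fintype A] [DecidableEq A] {n : ℕ}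
    (ν : A → ℝ) (hν : IsPMF ν) (μ : (Fin n → A) → ℝ) (hμ : IsPMF μ) (δ : ℝ)
    (hδ : δ = ftdist hammingN μ (fun x => ∏ i, ν (x i))) :
    totalCorr μ ≤
      2 * (Real.negMulLog δ + Real.negMulLog (1 - δ) + δ * Real.log (Fintype.card A)) * n := by
  classical
  rcases Nat.eq_zero_or_pos n with hn | hn
  · subst hn
    have h2 : μ default = 1 := by
      rw [← hμ.2]
      exact (Fintype.sum_unique _).symm
    have h1 : entropy μ = 0 := by
      rw [entropy, Fintype.sum_unique, h2, Real.negMulLog_one]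
    have h3 : totalCorr μ = 0 := by
      rw [totalCorr, h1]
      simp
    rw [h3]
    simp
  · rw [ftdist] at hδ
    set S : Set ℝ := {c | ∃ γ : ((Fin n → A) × (Fin n → A)) → ℝ, (∀ p, 0 ≤ γ p) ∧
      (∀ x, ∑ y, γ (x, y) = μ x) ∧ (∀ y, ∑ x, γ (x, y) = ∏ i, ν (y i)) ∧
      c = ∑ p : (Fin n → A) × (Fin n → A), γ p * hammingN p.1 p.2} with hSdef
    have hδ' : δ = sInf S := hδ
    have hSne : S.Nonempty := by
      refine ⟨∑ p : (Fin n → A) × (Fin n → A),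
        (μ p.1 * ∏ i, ν (p.2 i)) * hammingN p.1 p.2,
        fun p => μ p.1 * ∏ i, ν (p.2 i), ?_, ?_, ?_, rfl⟩
      · exact fun p => mul_nonneg (hμ.1 _) (Finset.prod_nonneg fun i _ => hν.1 _)
      · intro x
        dsimp only
        rw [← Finset.mul_sum, sum_prod_pmf ν hν, mul_one]
      · intro y
        dsimp only
        rw [← Finset.sum_mul, hμ.2, one_mul]
    have hSbdd : BddBelow S := by
      refine ⟨0, ?_⟩
      rintro c ⟨γ, hγ0, -, -, rfl⟩
      refine Finset.sum_nonneg fun p _ => mul_nonneg (hγ0 p) ?_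
      rw [hammingN]
      positivity
    have hkey : ∀ c ∈ S, totalCorr μ ≤ 2 * phiH (Fintype.card A) c * n := by
      rintro c ⟨γ, hγ0, hγ1, hγ2, rfl⟩
      exact key_bound hn ν hν μ hμ γ hγ0 hγ1 hγ2 _ rfl
    have hnR : (0:ℝ) < n := by exact_mod_cast hn
    have hcont : ContinuousAt (phiH (Fintype.card A)) δ := by
      have : Continuous (phiH (Fintype.card A)) := by
        unfold phiH
        fun_prop
      exact this.continuousAt
    have hgoal : totalCorr μ ≤ 2 * phiH (Fintype.card A) δ * n := by
      refine le_of_forall_pos_le_add ?_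
      intro ε hε
      obtain ⟨η, hη, hball⟩ := Metric.continuousAt_iff.mp hcont (ε / (2 * n)) (by positivity)
      obtain ⟨c, hcS, hclt⟩ := exists_lt_of_csInf_lt hSne
        (show sInf S < sInf S + η by linarith)
      have hcge : sInf S ≤ c := csInf_le hSbdd hcS
      have hdist : dist c δ < η := by
        rw [Real.dist_eq, hδ', abs_lt]
        constructor <;> linarith
      have hphi := hball hdist
      rw [Real.dist_eq, abs_lt] at hphi
      have h1 := hkey c hcS
      have h2 : phiH (Fintype.card A) c < phiH (Fintype.card A) δ + ε / (2 * n) := by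
        linarith [hphi.2]
      have h3 : 2 * phiH (Fintype.card A) c * n
          ≤ 2 * (phiH (Fintype.card A) δ + ε / (2 * n)) * n := by
        have := mul_le_mul_of_nonneg_right
          (by linarith : 2 * phiH (Fintype.card A) c ≤
            2 * (phiH (Fintype.card A) δ + ε / (2 * n))) (le_of_lt hnR)
        linarith
      have h4 : 2 * (phiH (Fintype.card A) δ + ε / (2 * n)) * n
          = 2 * phiH (Fintype.card A) δ * n + ε := by
        field_simp
      linarith
    have : phiH (Fintype.card A) δ
        = Real.negMulLog δ + Real.negMulLog (1 - δ) + δ * Real.log (Fintype.card A) := rfl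
    rw [this] at hgoal
    exact hgoal
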